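/- Let F be a field, N, M, n positive integers, and T = N + M. Let 𝓡 be a nonempty set of n-tuples of N×M matrices over F, and let ⟨𝓘(𝓡)⟩ = { (⟨[I|U_0]⟩,…,⟨[I|U_{n−1}]⟩) : (U_0,…,U_{n−1}) ∈ 𝓡 } be the subspace code obtained from the lifted multishot matrix code. Then the map (U_0,…,U_{n−1}) ↦ (⟨[I|U_0]⟩,…,⟨[I|U_{n−1}]⟩) is injective on 𝓡 (so |⟨𝓘(𝓡)⟩| = |𝓡|), and if 𝓡 contains at least two elements, the minimum extended subspace distance of ⟨𝓘(𝓡)⟩ equals twice the minimum extended rank distance of 𝓡: min over distinct pairs in 𝓡 of Σ_{j} d_S(⟨[I|U_j]⟩, ⟨[I|V_j]⟩) = 2 · min over distinct pairs in 𝓡 of Σ_j rank(V_j − U_j). -/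

import Mathlib

/-- The row space of a matrix: the subspace spanned by its rows. -/
noncomputable def rowSpace {F : Type*} [Field F] {m k : Type*} (X : Matrix m k F) :
    Submodule F (k → F) :=
  Submodule.span F (Set.range X)

/-- The subspace distance `d_S(U,V) = dim(U + V) - dim(U ∩ V)`. -/
noncomputable def subspaceDist {F : Type*} [Field F] {k : Type*}
    (U V : Submodule F (k → F)) : ℕ :=
  Module.finrank F ↥(U ⊔ V) - Module.finrank F ↥(U ⊓ V)

/-- The lifting `[I | U]` of an `N × M` matrix `U`. -/
def lifting {F : Type*} [Field F] {N M : ℕ} (U : Matrix (Fin N) (Fin M) F) :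
    Matrix (Fin N) (Fin (N + M)) F :=
  (Matrix.fromCols (1 : Matrix (Fin N) (Fin N) F) U).submatrix id finSumFinEquiv.symm

section Aux

open Matrix

variable {F : Type*} [Field F] {N M : ℕ}

lemma lift_vecMul (U : Matrix (Fin N) (Fin M) F) (x : Fin N → F) :
    x ᵥ* lifting U = Sum.elim x (x ᵥ* U) ∘ finSumFinEquiv.symm := by
  have h : lifting U = (Matrix.fromCols (1 : Matrix (Fin N) (Fin N) F) U).submatrix
      (Equiv.refl (Fin N)) finSumFinEquiv.symm := rfl
  rw [h, Matrix.submatrix_vecMul_equiv, Matrix.vecMul_fromCols, Matrix.vecMul_one]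
  rfl

lemma lift_vecMul_inl (U : Matrix (Fin N) (Fin M) F) (x : Fin N → F) (i : Fin N) :
    (x ᵥ* lifting U) (finSumFinEquiv (Sum.inl i)) = x i := by
  rw [lift_vecMul]; simp

lemma lift_vecMul_inr (U : Matrix (Fin N) (Fin M) F) (x : Fin N → F) (j : Fin M) :
    (x ᵥ* lifting U) (finSumFinEquiv (Sum.inr j)) = (x ᵥ* U) j := by
  rw [lift_vecMul]; simp

lemma lift_inj (U : Matrix (Fin N) (Fin M) F) :
    Function.Injective (lifting U).vecMulLinear := by
  rw [← LinearMap.ker_eq_bot, Submodule.eq_bot_iff]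
  intro x hx
  funext i
  have h : x ᵥ* lifting U = 0 := hx
  have := congr_fun h (finSumFinEquiv (Sum.inl i))
  rwa [lift_vecMul_inl] at this

lemma rowSpace_lifting_eq_range (U : Matrix (Fin N) (Fin M) F) :
    rowSpace (lifting U) = LinearMap.range (lifting U).vecMulLinear :=
  (range_vecMulLinear _).symm

lemma inter_eq (U V : Matrix (Fin N) (Fin M) F) :
    LinearMap.range (lifting U).vecMulLinear ⊓ LinearMap.range (lifting V).vecMulLinear
      = Submodule.map (lifting U).vecMulLinear (LinearMap.ker (V - U).vecMulLinear) := by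
  ext w
  constructor
  · intro hw
    obtain ⟨hw1, hw2⟩ := Submodule.mem_inf.mp hw
    obtain ⟨x, rfl⟩ := hw1
    obtain ⟨y, hy⟩ := hw2
    have hxy : y = x := by
      funext i
      have := congr_fun hy (finSumFinEquiv (Sum.inl i))
      simpa only [Matrix.vecMulLinear_apply, lift_vecMul_inl] using this
    subst hxy
    refine Submodule.mem_map.mpr ⟨y, LinearMap.mem_ker.mpr ?_, rfl⟩
    show y ᵥ* (V - U) = 0
    rw [Matrix.vecMul_sub, sub_eq_zero]
    funext j
    have := congr_fun hy (finSumFinEquiv (Sum.inr j))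
    simpa only [Matrix.vecMulLinear_apply, lift_vecMul_inr] using this
  · intro hw
    obtain ⟨x, hx, rfl⟩ := Submodule.mem_map.mp hw
    have hx' : x ᵥ* (V - U) = 0 := LinearMap.mem_ker.mp hx
    have hUV : x ᵥ* V = x ᵥ* U := by
      rw [← sub_eq_zero, ← Matrix.vecMul_sub]; exact hx'
    exact Submodule.mem_inf.mpr ⟨⟨x, rfl⟩, ⟨x, by
      simp only [Matrix.vecMulLinear_apply, lift_vecMul, hUV]⟩⟩

lemma finrank_range_lift (U : Matrix (Fin N) (Fin M) F) :
    Module.finrank F ↥(LinearMap.range (lifting U).vecMulLinear) = N := by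
  rw [LinearMap.finrank_range_of_inj (lift_inj U), Module.finrank_pi, Fintype.card_fin]

lemma finrank_ker_vecMul (A : Matrix (Fin N) (Fin M) F) :
    Module.finrank F ↥(LinearMap.ker A.vecMulLinear) = N - A.rank := by
  have hr : Module.finrank F ↥(LinearMap.range A.vecMulLinear) = A.rank := by
    rw [← Matrix.mulVecLin_transpose, ← Matrix.rank_transpose A]
    rfl
  have := LinearMap.finrank_range_add_finrank_ker A.vecMulLinear
  rw [hr, Module.finrank_pi, Fintype.card_fin] at this
  omega

/-- The key distance formula. -/
lemma dist_eq (U V : Matrix (Fin N) (Fin M) F) :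
    subspaceDist (rowSpace (lifting U)) (rowSpace (lifting V)) = 2 * (V - U).rank := by
  set RU := LinearMap.range (lifting U).vecMulLinear
  set RV := LinearMap.range (lifting V).vecMulLinear
  have hr : (V - U).rank ≤ N := Matrix.rank_le_height _
  have hinf : Module.finrank F ↥(RU ⊓ RV) = N - (V - U).rank := by
    rw [inter_eq U V]
    rw [← LinearEquiv.finrank_eq
      (Submodule.equivMapOfInjective _ (lift_inj U) (LinearMap.ker (V - U).vecMulLinear))]
    exact finrank_ker_vecMul (V - U)
  have hsum := Submodule.finrank_sup_add_finrank_inf_eq RU RV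
  rw [hinf, finrank_range_lift U, finrank_range_lift V] at hsum
  have hsup : Module.finrank F ↥(RU ⊔ RV) = N + (V - U).rank := by omega
  rw [subspaceDist, rowSpace_lifting_eq_range, rowSpace_lifting_eq_range]
  rw [show LinearMap.range (lifting U).vecMulLinear = RU from rfl,
      show LinearMap.range (lifting V).vecMulLinear = RV from rfl, hinf, hsup]
  omega

lemma rowSpace_lift_inj {U V : Matrix (Fin N) (Fin M) F}
    (h : rowSpace (lifting U) = rowSpace (lifting V)) : U = V := by
  have hd : subspaceDist (rowSpace (lifting U)) (rowSpace (lifting V)) = 0 := by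
    rw [h, subspaceDist, sup_idem, inf_idem, Nat.sub_self]
  rw [dist_eq] at hd
  have hrank : (V - U).rank = 0 := by omega
  have hker : LinearMap.ker (V - U).vecMulLinear = ⊤ := by
    have h1 := finrank_ker_vecMul (V - U)
    rw [hrank, Nat.sub_zero] at h1
    apply Submodule.eq_top_of_finrank_eq
    rw [h1, Module.finrank_pi, Fintype.card_fin]
  have : ∀ x : Fin N → F, x ᵥ* (V - U) = 0 := fun x =>
    (LinearMap.mem_ker).mp (hker ▸ Submodule.mem_top)
  have hUV : ∀ i, V i - U i = 0 := by
    intro i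
    have := this (Pi.single i 1)
    rwa [Matrix.single_one_vecMul i (V - U)] at this
  have hVU : V - U = 0 := by
    ext i j
    simpa using congr_fun (hUV i) j
  exact (sub_eq_zero.mp hVU).symm

end Aux

/-- Lifting a multishot rank-metric code is injective, and the resulting multishot
subspace code has minimum extended subspace distance equal to twice the minimum
extended rank distance of the original code. -/
theorem lifted_multishot_code_properties
    {F : Type*} [Field F] (N M n : ℕ) (hN : 0 < N) (hM : 0 < M) (hn : 0 < n)
    (𝓡 : Set (Fin n → Matrix (Fin N) (Fin M) F)) (h𝓡 : 𝓡.Nonempty) :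
    Set.InjOn
      (fun U : Fin n → Matrix (Fin N) (Fin M) F => fun j : Fin n => rowSpace (lifting (U j)))
      𝓡 ∧
    ((∃ U ∈ 𝓡, ∃ V ∈ 𝓡, U ≠ V) →
      sInf {d : ℕ | ∃ U ∈ 𝓡, ∃ V ∈ 𝓡, U ≠ V ∧
          d = ∑ j : Fin n, subspaceDist (rowSpace (lifting (U j))) (rowSpace (lifting (V j)))}
        = 2 * sInf {d : ℕ | ∃ U ∈ 𝓡, ∃ V ∈ 𝓡, U ≠ V ∧
          d = ∑ j : Fin n, (V j - U j).rank}) := by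
  constructor
  · intro U _ V _ h
    funext j
    exact rowSpace_lift_inj (congr_fun h j)
  · rintro ⟨U₀, hU₀, V₀, hV₀, hne₀⟩
    set S1 : Set ℕ := {d : ℕ | ∃ U ∈ 𝓡, ∃ V ∈ 𝓡, U ≠ V ∧
        d = ∑ j : Fin n, subspaceDist (rowSpace (lifting (U j))) (rowSpace (lifting (V j)))}
    set S2 : Set ℕ := {d : ℕ | ∃ U ∈ 𝓡, ∃ V ∈ 𝓡, U ≠ V ∧
        d = ∑ j : Fin n, (V j - U j).rank}
    have hdist : ∀ (U V : Fin n → Matrix (Fin N) (Fin M) F),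
        (∑ j : Fin n, subspaceDist (rowSpace (lifting (U j))) (rowSpace (lifting (V j))))
          = 2 * ∑ j : Fin n, (V j - U j).rank := by
      intro U V
      rw [Finset.mul_sum]
      exact Finset.sum_congr rfl fun j _ => dist_eq (U j) (V j)
    have hS1 : S1.Nonempty := ⟨_, U₀, hU₀, V₀, hV₀, hne₀, rfl⟩
    have hS2 : S2.Nonempty := ⟨_, U₀, hU₀, V₀, hV₀, hne₀, rfl⟩
    apply le_antisymm
    · obtain ⟨U, hU, V, hV, hne, heq⟩ := Nat.sInf_mem hS2
      calc sInf S1 ≤ ∑ j : Fin n, subspaceDist (rowSpace (lifting (U j))) (rowSpace (lifting (V j))) :=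
            Nat.sInf_le ⟨U, hU, V, hV, hne, rfl⟩
        _ = 2 * ∑ j : Fin n, (V j - U j).rank := hdist U V
        _ = 2 * sInf S2 := by rw [← heq]
    · obtain ⟨U, hU, V, hV, hne, heq⟩ := Nat.sInf_mem hS1
      calc 2 * sInf S2 ≤ 2 * ∑ j : Fin n, (V j - U j).rank :=
            Nat.mul_le_mul_left 2 (Nat.sInf_le ⟨U, hU, V, hV, hne, rfl⟩)
        _ = ∑ j : Fin n, subspaceDist (rowSpace (lifting (U j))) (rowSpace (lifting (V j))) :=
            (hdist U V).symm
        _ = sInf S1 := heq.symm
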